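/- In the single-step q-ary polarization transform (inputs C_1 = V_1 + α V_2, C_2 = V_2 with V_1, V_2 independent uniform on F_q, α ≠ 0, outputs Y_1, Y_2 through two independent copies of W), the split channel mutual informations satisfy I(W') ≤ I(W''), i.e., I(V_1; Y_1 Y_2) ≤ I(V_2; Y_1 Y_2 V_1). -/

import Mathlib

noncomputable section

open Classical in
/-- Probability of an event under the (finitely supported) weight function `p`. -/
def probOf {Ω : Type*} [Fintype Ω] (p : Ω → ℝ) (E : Ω → Prop) : ℝ :=
  ∑ ω, if E ω then p ω else 0

/-- Shannon entropy of the random variable `X` on the finite probability space `(Ω, p)`. -/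
def entropy {Ω A : Type*} [Fintype Ω] [Fintype A] (p : Ω → ℝ) (X : Ω → A) : ℝ :=
  -∑ a : A, probOf p (fun ω => X ω = a) * Real.log (probOf p (fun ω => X ω = a))

/-- Mutual information `I(X;Y)` on the finite probability space `(Ω, p)`. -/
def mutInfo {Ω A B : Type*} [Fintype Ω] [Fintype A] [Fintype B]
    (p : Ω → ℝ) (X : Ω → A) (Y : Ω → B) : ℝ :=
  entropy p X + entropy p Y - entropy p fun ω => (X ω, Y ω)

/-- Conditional mutual information `I(X;Y∣Z)` on the finite probability space `(Ω, p)`. -/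
def condMutInfo {Ω A B C : Type*} [Fintype Ω] [Fintype A] [Fintype B] [Fintype C]
    (p : Ω → ℝ) (X : Ω → A) (Y : Ω → B) (Z : Ω → C) : ℝ :=
  (entropy p fun ω => (X ω, Z ω)) + (entropy p fun ω => (Y ω, Z ω))
    - (entropy p fun ω => (X ω, Y ω, Z ω)) - entropy p Z

/-- The symmetric capacity `I(W)` of a channel `W : F → Y → ℝ` with uniform input:
the mutual information between input and output on `F × Y` with joint weight
`(1/|F|) W(y|v)`. -/
def chanMI {F Y : Type*} [Fintype F] [Fintype Y] (W : F → Y → ℝ) : ℝ :=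
  mutInfo (fun vy : F × Y => (1 / (Fintype.card F : ℝ)) * W vy.1 vy.2) Prod.fst Prod.snd
section Aux
open Finset Classical

variable {Ω A B C : Type*} [Fintype Ω] [Fintype A] [Fintype B] [Fintype C]

lemma sum_ite_const {ι : Type*} [Fintype ι] (c : Prop) [Decidable c] (f : ι → ℝ) :
    ∑ i, (if c then f i else 0) = if c then ∑ i, f i else 0 := by
  split_ifs <;> simp

lemma probOf_nonneg (p : Ω → ℝ) (hp : ∀ ω, 0 ≤ p ω) (E : Ω → Prop) :
    0 ≤ probOf p E := by
  unfold probOf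
  exact Finset.sum_nonneg fun ω _ => by split <;> simp [hp ω]

lemma probOf_congr (p : Ω → ℝ) {E F : Ω → Prop} (h : ∀ ω, E ω ↔ F ω) :
    probOf p E = probOf p F := by
  unfold probOf
  exact Finset.sum_congr rfl fun ω _ => if_congr (h ω) rfl rfl

lemma probOf_fiber (p : Ω → ℝ) (X : Ω → A) (E : Ω → Prop) :
    ∑ a, probOf p (fun ω => X ω = a ∧ E ω) = probOf p E := by
  classical
  unfold probOf
  rw [Finset.sum_comm]
  refine Finset.sum_congr rfl fun ω _ => ?_
  by_cases hE : E ω <;> simp [hE, Finset.sum_ite_eq]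

lemma sum_fiber (p : Ω → ℝ) (X : Ω → A) (f : A → ℝ) :
    ∑ a, probOf p (fun ω => X ω = a) * f a = ∑ ω, p ω * f (X ω) := by
  classical
  unfold probOf
  simp_rw [Finset.sum_mul]
  rw [Finset.sum_comm]
  refine Finset.sum_congr rfl fun ω _ => ?_
  simp [ite_mul, Finset.sum_ite_eq]

lemma entropy_eq (p : Ω → ℝ) (X : Ω → A) :
    entropy p X = -∑ ω, p ω * Real.log (probOf p fun ω' => X ω' = X ω) := by
  unfold entropy
  rw [← sum_fiber p X (fun a => Real.log (probOf p fun ω' => X ω' = a))]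

lemma entropy_comp_inj (p : Ω → ℝ) (X : Ω → A) (e : A → B) (he : Function.Injective e) :
    entropy p (fun ω => e (X ω)) = entropy p X := by
  rw [entropy_eq, entropy_eq]
  congr 1
  refine Finset.sum_congr rfl fun ω _ => ?_
  congr 2
  exact probOf_congr p fun ω' => by simp [he.eq_iff]

lemma entropy_of_dist (p : Ω → ℝ) (X : Ω → A) (f : A → ℝ)
    (h : ∀ a, probOf p (fun ω => X ω = a) = f a) :
    entropy p X = -∑ a, f a * Real.log (f a) := by
  unfold entropy
  simp_rw [h]

lemma gibbs {ι : Type*} [Fintype ι] (a b : ι → ℝ) (ha : ∀ i, 0 ≤ a i)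
    (hb : ∀ i, 0 ≤ b i) (hab : ∀ i, b i = 0 → a i = 0)
    (hsum : ∑ i, b i ≤ ∑ i, a i) :
    ∑ i, a i * Real.log (b i) ≤ ∑ i, a i * Real.log (a i) := by
  have key : ∀ i ∈ Finset.univ (α := ι),
      a i * Real.log (b i) - a i * Real.log (a i) ≤ b i - a i := by
    intro i _
    rcases (ha i).eq_or_lt with h0 | hpos
    · rw [← h0]; simpa using hb i
    · have hbpos : 0 < b i := (hb i).lt_of_ne' fun h => by
        have := hab i h; linarith
      have hlog := Real.log_le_sub_one_of_pos (div_pos hbpos hpos)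
      rw [Real.log_div hbpos.ne' hpos.ne'] at hlog
      have h2 := mul_le_mul_of_nonneg_left hlog hpos.le
      have h3 : a i * (b i / a i - 1) = b i - a i := by field_simp
      nlinarith
  have hs := Finset.sum_le_sum key
  rw [Finset.sum_sub_distrib, Finset.sum_sub_distrib] at hs
  linarith

lemma mul_log_mul {x y : ℝ} (hx : 0 ≤ x) (hy : 0 ≤ y) :
    (x * y) * Real.log (x * y) = y * (x * Real.log x) + x * (y * Real.log y) := by
  rcases hx.eq_or_lt with h | h
  · simp [← h]
  rcases hy.eq_or_lt with h' | h'
  · simp [← h']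
  rw [Real.log_mul h.ne' h'.ne']; ring

lemma sum_L_mul (u : A → ℝ) (v : B → ℝ) (hu : ∀ a, 0 ≤ u a) (hv : ∀ b, 0 ≤ v b) :
    ∑ a, ∑ b, (u a * v b) * Real.log (u a * v b)
      = (∑ b, v b) * (∑ a, u a * Real.log (u a))
        + (∑ a, u a) * (∑ b, v b * Real.log (v b)) := by
  have step : ∀ a ∈ Finset.univ (α := A), ∑ b, (u a * v b) * Real.log (u a * v b)
      = (∑ b, v b) * (u a * Real.log (u a)) + u a * (∑ b, v b * Real.log (v b)) := by
    intro a _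
    rw [Finset.sum_congr rfl fun b _ => mul_log_mul (hu a) (hv b),
      Finset.sum_add_distrib, ← Finset.sum_mul, ← Finset.mul_sum]
  rw [Finset.sum_congr rfl step, Finset.sum_add_distrib, ← Finset.mul_sum, ← Finset.sum_mul]

end Aux

section CMI
open Finset Classical

variable {Ω A B C : Type*} [Fintype Ω] [Fintype A] [Fintype B] [Fintype C]

lemma sum_prod3 (f : A × B × C → ℝ) :
    ∑ v, f v = ∑ x, ∑ y, ∑ z, f (x, y, z) := by
  rw [Fintype.sum_prod_type]
  exact Finset.sum_congr rfl fun x _ => by rw [Fintype.sum_prod_type]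

lemma sum3_rot (f : A → B → C → ℝ) :
    ∑ x, ∑ y, ∑ z, f x y z = ∑ z, ∑ x, ∑ y, f x y z := by
  rw [show (∑ x, ∑ y, ∑ z, f x y z) = ∑ x, ∑ z, ∑ y, f x y z from
    Finset.sum_congr rfl fun x _ => Finset.sum_comm .., Finset.sum_comm]

lemma condMutInfo_nonneg (p : Ω → ℝ) (hp : ∀ ω, 0 ≤ p ω)
    (X : Ω → A) (Y : Ω → B) (Z : Ω → C) : 0 ≤ condMutInfo p X Y Z := by
  classical
  set a : A × B × C → ℝ := fun v => probOf p (fun ω => (X ω, Y ω, Z ω) = v) with ha_def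
  set PXZ : A × C → ℝ := fun v => probOf p (fun ω => (X ω, Z ω) = v) with hPXZ_def
  set PYZ : B × C → ℝ := fun v => probOf p (fun ω => (Y ω, Z ω) = v) with hPYZ_def
  set PZ : C → ℝ := fun c => probOf p (fun ω => Z ω = c) with hPZ_def
  have ha0 : ∀ v, 0 ≤ a v := fun v => probOf_nonneg p hp _
  have hPXZ0 : ∀ v, 0 ≤ PXZ v := fun v => probOf_nonneg p hp _
  have hPYZ0 : ∀ v, 0 ≤ PYZ v := fun v => probOf_nonneg p hp _
  have hPZ0 : ∀ c, 0 ≤ PZ c := fun c => probOf_nonneg p hp _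
  -- marginals
  have mXZ : ∀ x z, ∑ y, a (x, y, z) = PXZ (x, z) := by
    intro x z
    simp only [hPXZ_def]
    rw [← probOf_fiber p Y (fun ω => (X ω, Z ω) = (x, z))]
    exact Finset.sum_congr rfl fun y _ => probOf_congr p fun ω => by
      simp only [Prod.ext_iff]; try tauto
  have mYZ : ∀ y z, ∑ x, a (x, y, z) = PYZ (y, z) := by
    intro y z
    simp only [hPYZ_def]
    rw [← probOf_fiber p X (fun ω => (Y ω, Z ω) = (y, z))]
    exact Finset.sum_congr rfl fun x _ => probOf_congr p fun ω => by
      simp only [Prod.ext_iff]; try tauto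
  have mZ : ∀ z, ∑ x, ∑ y, a (x, y, z) = PZ z := by
    intro z
    simp only [hPZ_def]
    rw [← probOf_fiber p X (fun ω => Z ω = z)]
    refine Finset.sum_congr rfl fun x _ => ?_
    rw [← probOf_fiber p Y (fun ω => X ω = x ∧ Z ω = z)]
    exact Finset.sum_congr rfl fun y _ => probOf_congr p fun ω => by
      simp only [Prod.ext_iff]; try tauto
  have mXZ' : ∀ z, ∑ x, PXZ (x, z) = PZ z := by
    intro z
    rw [← mZ z]
    exact Finset.sum_congr rfl fun x _ => (mXZ x z).symm
  have mYZ' : ∀ z, ∑ y, PYZ (y, z) = PZ z := by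
    intro z
    rw [← mZ z, Finset.sum_comm]
    exact Finset.sum_congr rfl fun y _ => (mYZ y z).symm
  set b : A × B × C → ℝ := fun v => PXZ (v.1, v.2.2) * PYZ v.2 / PZ v.2.2 with hb_def
  have hb0 : ∀ v, 0 ≤ b v := fun v =>
    div_nonneg (mul_nonneg (hPXZ0 _) (hPYZ0 _)) (hPZ0 _)
  have hpos : ∀ v : A × B × C, 0 < a v →
      0 < PXZ (v.1, v.2.2) ∧ 0 < PYZ v.2 ∧ 0 < PZ v.2.2 := by
    rintro ⟨x, y, z⟩ hav
    have h1 : 0 < PXZ (x, z) := lt_of_lt_of_le hav <| by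
      rw [← mXZ x z]
      exact Finset.single_le_sum (f := fun y => a (x, y, z)) (fun i _ => ha0 _) (mem_univ y)
    have h2 : 0 < PYZ (y, z) := lt_of_lt_of_le hav <| by
      rw [← mYZ y z]
      exact Finset.single_le_sum (f := fun x => a (x, y, z)) (fun i _ => ha0 _) (mem_univ x)
    have h3 : 0 < PZ z := lt_of_lt_of_le h1 <| by
      rw [← mXZ' z]
      exact Finset.single_le_sum (f := fun x => PXZ (x, z)) (fun i _ => hPXZ0 _) (mem_univ x)
    exact ⟨h1, h2, h3⟩
  have hab : ∀ v, b v = 0 → a v = 0 := by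
    intro v hbv
    by_contra hav
    obtain ⟨h1, h2, h3⟩ := hpos v ((ha0 v).lt_of_ne' hav)
    have hbp : 0 < b v := by
      rw [hb_def]
      exact div_pos (mul_pos h1 h2) h3
    exact absurd hbv hbp.ne'
  have hsum_a : ∑ v, a v = ∑ z, PZ z := by
    rw [sum_prod3 (f := a), sum3_rot]
    exact Finset.sum_congr rfl fun z _ => mZ z
  have hsum_b : ∑ v, b v ≤ ∑ v, a v := by
    rw [hsum_a, sum_prod3 (f := b), sum3_rot]
    refine Finset.sum_le_sum fun z _ => ?_
    have inner : ∀ x, ∑ y, b (x, y, z) = PXZ (x, z) * (PZ z)⁻¹ * PZ z := by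
      intro x
      simp only [hb_def]
      simp_rw [div_eq_mul_inv, mul_right_comm]
      rw [← Finset.mul_sum, mYZ' z]
      ring
    rw [Finset.sum_congr rfl fun x _ => inner x, ← Finset.sum_mul, ← Finset.sum_mul, mXZ' z]
    rcases eq_or_ne (PZ z) 0 with h | h
    · simp [h]
    · rw [mul_inv_cancel₀ h, one_mul]
  have hlogb : ∀ v, a v * Real.log (b v)
      = a v * Real.log (PXZ (v.1, v.2.2)) + a v * Real.log (PYZ v.2)
        - a v * Real.log (PZ v.2.2) := by
    intro v
    rcases (ha0 v).eq_or_lt with h0 | hpos'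
    · rw [← h0]; ring
    · obtain ⟨h1, h2, h3⟩ := hpos v hpos'
      have hbv : Real.log (b v)
          = Real.log (PXZ (v.1, v.2.2)) + Real.log (PYZ v.2) - Real.log (PZ v.2.2) := by
        rw [hb_def]
        dsimp only
        rw [Real.log_div (mul_ne_zero h1.ne' h2.ne') h3.ne', Real.log_mul h1.ne' h2.ne']
      rw [hbv]; ring
  -- regroupings
  have regXZ : ∑ v : A × B × C, a v * Real.log (PXZ (v.1, v.2.2))
      = ∑ w : A × C, PXZ w * Real.log (PXZ w) := by
    rw [sum_prod3 (f := fun v => a v * Real.log (PXZ (v.1, v.2.2))), Fintype.sum_prod_type]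
    dsimp only
    refine Finset.sum_congr rfl fun x _ => ?_
    rw [Finset.sum_comm]
    refine Finset.sum_congr rfl fun z _ => ?_
    rw [← Finset.sum_mul, mXZ]
  have regYZ : ∑ v : A × B × C, a v * Real.log (PYZ v.2)
      = ∑ w : B × C, PYZ w * Real.log (PYZ w) := by
    rw [sum_prod3 (f := fun v => a v * Real.log (PYZ v.2)), Finset.sum_comm,
      Fintype.sum_prod_type]
    dsimp only
    refine Finset.sum_congr rfl fun y _ => ?_
    rw [Finset.sum_comm]
    refine Finset.sum_congr rfl fun z _ => ?_
    rw [← Finset.sum_mul, mYZ]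
  have regZ : ∑ v : A × B × C, a v * Real.log (PZ v.2.2)
      = ∑ z, PZ z * Real.log (PZ z) := by
    rw [sum_prod3 (f := fun v => a v * Real.log (PZ v.2.2)), sum3_rot]
    dsimp only
    refine Finset.sum_congr rfl fun z _ => ?_
    simp only [← Finset.sum_mul]
    rw [mZ]
  -- express entropies
  have hXZ : entropy p (fun ω => (X ω, Z ω)) = -∑ w : A × C, PXZ w * Real.log (PXZ w) :=
    entropy_of_dist p _ PXZ fun w => rfl
  have hYZ : entropy p (fun ω => (Y ω, Z ω)) = -∑ w : B × C, PYZ w * Real.log (PYZ w) :=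
    entropy_of_dist p _ PYZ fun w => rfl
  have hXYZ : entropy p (fun ω => (X ω, Y ω, Z ω)) = -∑ v, a v * Real.log (a v) :=
    entropy_of_dist p _ a fun v => rfl
  have hZ : entropy p Z = -∑ z, PZ z * Real.log (PZ z) :=
    entropy_of_dist p _ PZ fun z => rfl
  have hSb : ∑ v, a v * Real.log (b v)
      = ∑ v, a v * Real.log (PXZ (v.1, v.2.2)) + ∑ v, a v * Real.log (PYZ v.2)
        - ∑ v, a v * Real.log (PZ v.2.2) := by
    rw [Finset.sum_congr rfl fun v _ => hlogb v, Finset.sum_sub_distrib,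
      Finset.sum_add_distrib]
  have hg := gibbs a b ha0 hb0 hab hsum_b
  unfold condMutInfo
  rw [hXZ, hYZ, hXYZ, hZ, ← regXZ, ← regYZ, ← regZ]
  linarith

end CMI

noncomputable section Main
open Finset Classical

variable {F Y : Type} [Field F] [Fintype F] [Fintype Y]

def pdist (W : F → Y → ℝ) (α : F) : F × F × Y × Y → ℝ := fun z =>
  (1 / (Fintype.card F : ℝ)) * (1 / (Fintype.card F : ℝ))
    * W (z.1 + α * z.2.1) z.2.2.1 * W z.2.1 z.2.2.2

def gdist (W : F → Y → ℝ) : F × Y → ℝ := fun cy => (1 / (Fintype.card F : ℝ)) * W cy.1 cy.2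

def tdist (W : F → Y → ℝ) : Y → ℝ := fun y => ∑ c, gdist W (c, y)

variable (W : F → Y → ℝ) (α : F)

lemma hcard : (0 : ℝ) < (Fintype.card F : ℝ) := by exact_mod_cast Fintype.card_pos

lemma pdist_nonneg (hW0 : ∀ c y, 0 ≤ W c y) : ∀ z, 0 ≤ pdist W α z := by
  intro z
  unfold pdist
  have h := (hcard (F := F)).le
  exact mul_nonneg (mul_nonneg (mul_nonneg (by positivity) (by positivity)) (hW0 _ _)) (hW0 _ _)

lemma gdist_nonneg (hW0 : ∀ c y, 0 ≤ W c y) : ∀ w, 0 ≤ gdist W w := by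
  intro w
  unfold gdist
  exact mul_nonneg (by positivity) (hW0 _ _)

lemma tdist_nonneg (hW0 : ∀ c y, 0 ≤ W c y) : ∀ y, 0 ≤ tdist W y :=
  fun y => Finset.sum_nonneg fun c _ => gdist_nonneg W hW0 _

lemma gdist_sum (hW1 : ∀ c, ∑ y, W c y = 1) : ∑ w : F × Y, gdist W w = 1 := by
  rw [Fintype.sum_prod_type]
  simp only [gdist]
  simp_rw [← Finset.mul_sum, hW1]
  rw [Finset.sum_const, card_univ, nsmul_eq_mul, mul_one]
  field_simp

lemma tdist_sum (hW1 : ∀ c, ∑ y, W c y = 1) : ∑ y, tdist W y = 1 := by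
  rw [← gdist_sum W hW1, Fintype.sum_prod_type]
  unfold tdist
  exact Finset.sum_comm

-- distribution computations
lemma dV1 (hW1 : ∀ c, ∑ y, W c y = 1) (x : F) :
    probOf (pdist W α) (fun ω => ω.1 = x) = 1 / (Fintype.card F : ℝ) := by
  classical
  have h : probOf (pdist W α) (fun ω => ω.1 = x)
      = ∑ v2, ∑ y1, ∑ y2, pdist W α (x, v2, y1, y2) := by
    simp only [probOf, Fintype.sum_prod_type, Prod.mk.injEq, ite_and]
    rw [Finset.sum_eq_single x]
    · exact Finset.sum_congr rfl fun _ _ => Finset.sum_congr rfl fun _ _ =>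
        Finset.sum_congr rfl fun _ _ => if_pos rfl
    · intro b _ hb
      exact Finset.sum_eq_zero fun _ _ => Finset.sum_eq_zero fun _ _ =>
        Finset.sum_eq_zero fun _ _ => if_neg hb
    · intro h; exact absurd (mem_univ x) h
  rw [h]
  have i2 : ∀ v2 : F, ∀ y1 : Y, (∑ y2, pdist W α (x, v2, y1, y2))
      = 1 / (Fintype.card F : ℝ) * (1 / (Fintype.card F : ℝ)) * W (x + α * v2) y1 := by
    intro v2 y1
    simp only [pdist]
    rw [← Finset.mul_sum, hW1, mul_one]
  have i1 : ∀ v2 : F, (∑ y1, ∑ y2, pdist W α (x, v2, y1, y2))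
      = 1 / (Fintype.card F : ℝ) * (1 / (Fintype.card F : ℝ)) := by
    intro v2
    rw [Finset.sum_congr rfl fun y1 _ => i2 v2 y1, ← Finset.mul_sum, hW1, mul_one]
  rw [Finset.sum_congr rfl fun v2 _ => i1 v2, Finset.sum_const, card_univ, nsmul_eq_mul]
  have := hcard (F := F)
  field_simp

lemma dV2 (hW1 : ∀ c, ∑ y, W c y = 1) (x : F) :
    probOf (pdist W α) (fun ω => ω.2.1 = x) = 1 / (Fintype.card F : ℝ) := by
  classical
  have h : probOf (pdist W α) (fun ω => ω.2.1 = x)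
      = ∑ v1, ∑ y1, ∑ y2, pdist W α (v1, x, y1, y2) := by
    simp only [probOf, Fintype.sum_prod_type, Prod.mk.injEq, ite_and]
    refine Finset.sum_congr rfl fun v1 _ => ?_
    rw [Finset.sum_eq_single x]
    · exact Finset.sum_congr rfl fun _ _ => Finset.sum_congr rfl fun _ _ => if_pos rfl
    · intro b _ hb
      exact Finset.sum_eq_zero fun _ _ => Finset.sum_eq_zero fun _ _ => if_neg hb
    · intro h; exact absurd (mem_univ x) h
  rw [h]
  have i2 : ∀ v1 : F, ∀ y1 : Y, (∑ y2, pdist W α (v1, x, y1, y2))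
      = 1 / (Fintype.card F : ℝ) * (1 / (Fintype.card F : ℝ)) * W (v1 + α * x) y1 := by
    intro v1 y1
    simp only [pdist]
    rw [← Finset.mul_sum, hW1, mul_one]
  have i1 : ∀ v1 : F, (∑ y1, ∑ y2, pdist W α (v1, x, y1, y2))
      = 1 / (Fintype.card F : ℝ) * (1 / (Fintype.card F : ℝ)) := by
    intro v1
    rw [Finset.sum_congr rfl fun y1 _ => i2 v1 y1, ← Finset.mul_sum, hW1, mul_one]
  rw [Finset.sum_congr rfl fun v1 _ => i1 v1, Finset.sum_const, card_univ, nsmul_eq_mul]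
  have := hcard (F := F)
  field_simp

lemma dY2 (hW1 : ∀ c, ∑ y, W c y = 1) (b : Y) :
    probOf (pdist W α) (fun ω => ω.2.2.2 = b) = tdist W b := by
  classical
  have h : probOf (pdist W α) (fun ω => ω.2.2.2 = b)
      = ∑ v1, ∑ v2, ∑ y1, pdist W α (v1, v2, y1, b) := by
    simp only [probOf, Fintype.sum_prod_type, Prod.mk.injEq, ite_and]
    simp only [sum_ite_const, Finset.sum_ite_eq', Finset.mem_univ, if_true]
  rw [h]
  have i1 : ∀ v1 v2 : F, (∑ y1, pdist W α (v1, v2, y1, b))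
      = 1 / (Fintype.card F : ℝ) * (1 / (Fintype.card F : ℝ)) * W v2 b := by
    intro v1 v2
    simp only [pdist]
    simp_rw [mul_right_comm _ (W (v1 + α * v2) _) (W v2 b)]
    rw [← Finset.mul_sum, hW1, mul_one]
  rw [Finset.sum_congr rfl fun v1 _ => Finset.sum_congr rfl fun v2 _ => i1 v1 v2]
  rw [Finset.sum_const, card_univ, nsmul_eq_mul]
  unfold tdist gdist
  rw [← Finset.mul_sum, ← Finset.mul_sum]
  have := hcard (F := F)
  field_simp

lemma dV2Y2 (hW1 : ∀ c, ∑ y, W c y = 1) (w : F × Y) :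
    probOf (pdist W α) (fun ω => (ω.2.1, ω.2.2.2) = w) = gdist W w := by
  classical
  obtain ⟨a, b⟩ := w
  have h : probOf (pdist W α) (fun ω => (ω.2.1, ω.2.2.2) = (a, b))
      = ∑ v1, ∑ y1, pdist W α (v1, a, y1, b) := by
    simp only [probOf, Fintype.sum_prod_type, Prod.mk.injEq, ite_and]
    simp only [sum_ite_const, Finset.sum_ite_eq', Finset.mem_univ, if_true]
  rw [h]
  have i1 : ∀ v1 : F, (∑ y1, pdist W α (v1, a, y1, b))
      = 1 / (Fintype.card F : ℝ) * (1 / (Fintype.card F : ℝ)) * W a b := by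
    intro v1
    simp only [pdist]
    simp_rw [mul_right_comm _ (W (v1 + α * a) _) (W a b)]
    rw [← Finset.mul_sum, hW1, mul_one]
  rw [Finset.sum_congr rfl fun v1 _ => i1 v1, Finset.sum_const, card_univ, nsmul_eq_mul]
  unfold gdist
  have := hcard (F := F)
  field_simp

lemma dV2Y (hW1 : ∀ c, ∑ y, W c y = 1) (w : F × Y × Y) :
    probOf (pdist W α) (fun ω => (ω.2.1, (ω.2.2.1, ω.2.2.2)) = w)
      = tdist W w.2.1 * gdist W (w.1, w.2.2) := by
  classical
  obtain ⟨a, b1, b2⟩ := w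
  have h : probOf (pdist W α) (fun ω => (ω.2.1, (ω.2.2.1, ω.2.2.2)) = (a, b1, b2))
      = ∑ v1, pdist W α (v1, a, b1, b2) := by
    simp only [probOf, Fintype.sum_prod_type, Prod.mk.injEq, ite_and]
    simp only [sum_ite_const, Finset.sum_ite_eq', Finset.mem_univ, if_true]
  rw [h]
  simp only [pdist]
  simp_rw [mul_right_comm _ (W (_ + α * a) b1) (W a b2)]
  rw [← Finset.mul_sum]
  rw [show (∑ i, W (i + α * a) b1) = ∑ c, W c b1 from
    Fintype.sum_equiv (Equiv.addRight (α * a)) _ _ (fun v1 => rfl)]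
  unfold tdist gdist
  rw [← Finset.mul_sum]
  ring

lemma dfull (x : F × F × Y × Y) :
    probOf (pdist W α) (fun ω => ω = x) = pdist W α x := by
  classical
  simp only [probOf]
  refine (Finset.sum_eq_single x ?_ ?_).trans (if_pos rfl)
  · intro b _ hb; exact if_neg hb
  · intro hx; exact absurd (mem_univ x) hx

def eqFull (α : F) : (F × F × Y × Y) ≃ (F × Y) × (F × Y) where
  toFun x := ((x.1 + α * x.2.1, x.2.2.1), (x.2.1, x.2.2.2))
  invFun u := (u.1.1 - α * u.2.1, (u.2.1, (u.1.2, u.2.2)))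
  left_inv := by
    rintro ⟨a, b, c, d⟩
    show (a + α * b - α * b, b, c, d) = (a, b, c, d)
    rw [add_sub_cancel_right]
  right_inv := by
    rintro ⟨⟨c1, y1⟩, ⟨c2, y2⟩⟩
    show ((c1 - α * c2 + α * c2, y1), (c2, y2)) = ((c1, y1), (c2, y2))
    rw [sub_add_cancel]

def eqTriple : (F × Y × Y) ≃ Y × (F × Y) where
  toFun w := (w.2.1, (w.1, w.2.2))
  invFun u := (u.2.1, (u.1, u.2.2))
  left_inv := by rintro ⟨a, b, c⟩; rfl
  right_inv := by rintro ⟨a, b, c⟩; rfl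

lemma Efull (hW0 : ∀ c y, 0 ≤ W c y) (hW1 : ∀ c, ∑ y, W c y = 1) :
    entropy (pdist W α) (fun ω => ω)
      = -(2 * ∑ w : F × Y, gdist W w * Real.log (gdist W w)) := by
  rw [entropy_of_dist _ _ _ (dfull W α)]
  have hpg : ∀ x : F × F × Y × Y, pdist W α x
      = gdist W (x.1 + α * x.2.1, x.2.2.1) * gdist W (x.2.1, x.2.2.2) := by
    intro x; unfold pdist gdist; ring
  rw [Finset.sum_congr rfl fun x _ => by rw [hpg x]]
  rw [show (∑ x : F × F × Y × Y,
        gdist W (x.1 + α * x.2.1, x.2.2.1) * gdist W (x.2.1, x.2.2.2)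
          * Real.log (gdist W (x.1 + α * x.2.1, x.2.2.1) * gdist W (x.2.1, x.2.2.2)))
      = ∑ u : (F × Y) × (F × Y), (gdist W u.1 * gdist W u.2)
          * Real.log (gdist W u.1 * gdist W u.2) from
    Fintype.sum_equiv (eqFull α) _ _ (fun x => rfl)]
  rw [Fintype.sum_prod_type,
    sum_L_mul (gdist W) (gdist W) (gdist_nonneg W hW0) (gdist_nonneg W hW0),
    gdist_sum W hW1]
  ring

lemma Ev2y (hW0 : ∀ c y, 0 ≤ W c y) (hW1 : ∀ c, ∑ y, W c y = 1) :
    entropy (pdist W α) (fun ω => (ω.2.1, (ω.2.2.1, ω.2.2.2)))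
      = -((∑ y, tdist W y * Real.log (tdist W y))
          + ∑ w : F × Y, gdist W w * Real.log (gdist W w)) := by
  rw [entropy_of_dist _ _ _ (dV2Y W α hW1)]
  rw [show (∑ w : F × Y × Y, tdist W w.2.1 * gdist W (w.1, w.2.2)
        * Real.log (tdist W w.2.1 * gdist W (w.1, w.2.2)))
      = ∑ u : Y × (F × Y), (tdist W u.1 * gdist W u.2)
          * Real.log (tdist W u.1 * gdist W u.2) from
    Fintype.sum_equiv eqTriple _ _ (fun w => rfl)]
  rw [Fintype.sum_prod_type,
    sum_L_mul (tdist W) (gdist W) (tdist_nonneg W hW0) (gdist_nonneg W hW0),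
    gdist_sum W hW1, tdist_sum W hW1]
  ring

lemma keyId (hW0 : ∀ c y, 0 ≤ W c y) (hW1 : ∀ c, ∑ y, W c y = 1) :
    entropy (pdist W α) (fun ω => ω) + entropy (pdist W α) (fun ω => ω.2.2.2)
      = entropy (pdist W α) (fun ω => (ω.2.1, (ω.2.2.1, ω.2.2.2)))
        + entropy (pdist W α) (fun ω => (ω.2.1, ω.2.2.2)) := by
  rw [Efull W α hW0 hW1, Ev2y W α hW0 hW1,
    entropy_of_dist _ _ _ (dY2 W α hW1), entropy_of_dist _ _ _ (dV2Y2 W α hW1)]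
  ring

theorem main_ineq (hW0 : ∀ c y, 0 ≤ W c y) (hW1 : ∀ c, ∑ y, W c y = 1) :
    mutInfo (pdist W α) (fun z => z.1) (fun z => (z.2.2.1, z.2.2.2)) ≤
      mutInfo (pdist W α) (fun z => z.2.1) (fun z => (z.2.2.1, z.2.2.2, z.1)) := by
  classical
  set p := pdist W α with hp_def
  have hp : ∀ ω, 0 ≤ p ω := pdist_nonneg W α hW0
  have hA := condMutInfo_nonneg p hp (fun ω => ω.1) (fun ω => ω.2.1)
    (fun ω => (ω.2.2.1, ω.2.2.2))
  have hB := condMutInfo_nonneg p hp (fun ω => ω.2.1) (fun ω => (ω.1, ω.2.2.1))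
    (fun ω => ω.2.2.2)
  have e1 : entropy p (fun ω => ω.2.1) = entropy p (fun ω => ω.1) := by
    rw [entropy_of_dist p _ (fun _ : F => 1 / (Fintype.card F : ℝ)) (dV2 W α hW1),
      entropy_of_dist p _ (fun _ : F => 1 / (Fintype.card F : ℝ)) (dV1 W α hW1)]
  have e2 : entropy p (fun ω => (ω.2.2.1, ω.2.2.2, ω.1))
      = entropy p (fun ω => (ω.1, (ω.2.2.1, ω.2.2.2))) :=
    entropy_comp_inj p (fun ω => (ω.1, (ω.2.2.1, ω.2.2.2)))
      (fun u : F × Y × Y => (u.2.1, u.2.2, u.1))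
      (Function.LeftInverse.injective
        (g := fun w : Y × Y × F => (w.2.2, (w.1, w.2.1))) fun u => rfl)
  have e3a : entropy p (fun ω => (ω.2.1, (ω.2.2.1, ω.2.2.2, ω.1)))
      = entropy p (fun ω => ω) :=
    entropy_comp_inj p (fun ω => ω)
      (fun u : F × F × Y × Y => (u.2.1, (u.2.2.1, u.2.2.2, u.1)))
      (Function.LeftInverse.injective
        (g := fun w : F × Y × Y × F => (w.2.2.2, (w.1, (w.2.1, w.2.2.1)))) fun u => rfl)
  have e3b : entropy p (fun ω => (ω.1, ω.2.1, (ω.2.2.1, ω.2.2.2)))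
      = entropy p (fun ω => ω) :=
    entropy_comp_inj p (fun ω => ω)
      (fun u : F × F × Y × Y => (u.1, u.2.1, (u.2.2.1, u.2.2.2)))
      (Function.LeftInverse.injective
        (g := fun w : F × F × Y × Y => (w.1, (w.2.1, (w.2.2.1, w.2.2.2)))) fun u => rfl)
  have e3c : entropy p (fun ω => (ω.2.1, (ω.1, ω.2.2.1), ω.2.2.2))
      = entropy p (fun ω => ω) :=
    entropy_comp_inj p (fun ω => ω)
      (fun u : F × F × Y × Y => (u.2.1, (u.1, u.2.2.1), u.2.2.2))
      (Function.LeftInverse.injective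
        (g := fun w : F × (F × Y) × Y => (w.2.1.1, (w.1, (w.2.1.2, w.2.2)))) fun u => rfl)
  have e4 : entropy p (fun ω => ((ω.1, ω.2.2.1), ω.2.2.2))
      = entropy p (fun ω => (ω.1, (ω.2.2.1, ω.2.2.2))) :=
    entropy_comp_inj p (fun ω => (ω.1, (ω.2.2.1, ω.2.2.2)))
      (fun u : F × Y × Y => ((u.1, u.2.1), u.2.2))
      (Function.LeftInverse.injective
        (g := fun w : (F × Y) × Y => (w.1.1, (w.1.2, w.2))) fun u => rfl)
  have key := keyId W α hW0 hW1
  rw [← hp_def] at key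
  simp only [mutInfo]
  simp only [condMutInfo] at hA hB
  linarith [hA, hB, e1, e2, e3a, e3b, e3c, e4, key]

end Main

/-- In the single-step `q`-ary polarization transform (inputs
`C₁ = V₁ + α V₂`, `C₂ = V₂` with `V₁, V₂` independent uniform on `F_q`, `α ≠ 0`, outputs
`Y₁, Y₂` through two independent copies of `W`), the split-channel mutual informations
satisfy `I(W') ≤ I(W'')`, i.e. `I(V₁; Y₁Y₂) ≤ I(V₂; Y₁Y₂V₁)`. -/
theorem stmt7 {F Y : Type} [Field F] [Fintype F] [Fintype Y]
    (W : F → Y → ℝ) (hW0 : ∀ c y, 0 ≤ W c y) (hW1 : ∀ c, ∑ y, W c y = 1)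
    (α : F) (hα : α ≠ 0) :
    letI q : ℝ := (Fintype.card F : ℝ)
    letI p : F × F × Y × Y → ℝ :=
      fun z => (1 / q) * (1 / q) * W (z.1 + α * z.2.1) z.2.2.1 * W z.2.1 z.2.2.2
    mutInfo p (fun z => z.1) (fun z => (z.2.2.1, z.2.2.2)) ≤
      mutInfo p (fun z => z.2.1) (fun z => (z.2.2.1, z.2.2.2, z.1)) := by
  exact main_ineq W α hW0 hW1
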